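/- Fix β > 0, p ∈ (1/2,1], and t ∈ (-1/2, ∞). Let f_t(x) = √(1+2t)·x^t on (0,1] and let T_κ be the integral operator with kernel κ(x,y) = β·max{x,y}^(-(2p-1)/p). Then ‖f_t‖₂ = 1 and ‖T_κ f_t‖₂² = β²·(1+2t)(2t²+7t+4+1/p) / ((1+t)²·(t+1/p)·(2t+2/p-1)). In particular, ‖T_κ‖ ≥ β·sup_{t>-1/2} √((1+2t)(2t²+7t+4+1/p)/((1+t)²(t+1/p)(2t+2/p-1))). -/

import Mathlib

open MeasureTheory Set

lemma exp_neg_image : (fun u : ℝ => Real.exp (-u)) '' Set.Ioi 0 = Set.Ioo 0 1 := by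
  ext x
  constructor
  · rintro ⟨u, hu, rfl⟩
    exact ⟨Real.exp_pos _, Real.exp_lt_one_iff.2 (by simpa using hu)⟩
  · rintro ⟨hx0, hx1⟩
    exact ⟨-Real.log x, by simpa using Real.log_neg hx0 hx1,
      by show Real.exp (-(-Real.log x)) = x; rw [neg_neg, Real.exp_log hx0]⟩

lemma neg_log_pow (k : ℕ) :
    IntegrableOn (fun x : ℝ => (-Real.log x)^k) (Set.Ioo 0 1) ∧
    ∫ x in Set.Ioo (0:ℝ) 1, (-Real.log x)^k = (Nat.factorial k : ℝ) := by
  have hs : MeasurableSet (Set.Ioi (0:ℝ)) := measurableSet_Ioi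
  have hd : ∀ u ∈ Set.Ioi (0:ℝ), HasDerivWithinAt (fun u : ℝ => Real.exp (-u))
      (-Real.exp (-u)) (Set.Ioi 0) u := by
    intro u _
    simpa [Function.comp_def] using ((Real.hasDerivAt_exp (-u)).comp u (hasDerivAt_neg u)).hasDerivWithinAt
  have hinj : Set.InjOn (fun u : ℝ => Real.exp (-u)) (Set.Ioi 0) := fun a _ b _ h => by
    have := Real.exp_injective h; linarith
  have hcongr : ∀ u ∈ Set.Ioi (0:ℝ),
      |(-Real.exp (-u))| • (-Real.log (Real.exp (-u)))^k = Real.exp (-u) * u ^ ((k:ℝ)+1-1) := by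
    intro u hu
    rw [abs_neg, abs_of_pos (Real.exp_pos _), Real.log_exp, neg_neg, smul_eq_mul]
    rw [add_sub_cancel_right, Real.rpow_natCast]
  have hGint := Real.GammaIntegral_convergent (s := (k:ℝ)+1) (by positivity)
  constructor
  · rw [← exp_neg_image,
      integrableOn_image_iff_integrableOn_abs_deriv_smul hs hd hinj]
    exact (hGint.congr_fun (fun u hu => (hcongr u hu).symm) hs).congr_fun
      (fun u hu => rfl) hs
  · rw [← exp_neg_image, integral_image_eq_integral_abs_deriv_smul hs hd hinj,
      setIntegral_congr_fun hs hcongr]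
    rw [← Real.Gamma_eq_integral (by positivity)]
    rw [show (k:ℝ)+1 = ((k:ℝ)+1) from rfl, ← Nat.cast_one (R := ℝ), ← Nat.cast_add, Nat.cast_add, Nat.cast_one, Real.Gamma_nat_eq_factorial]

lemma integrableOn_log_Ioc : IntegrableOn Real.log (Set.Ioc (0:ℝ) 1) := by
  have h := (neg_log_pow 1).1
  rw [← integrableOn_Ioc_iff_integrableOn_Ioo] at h
  refine IntegrableOn.congr_fun h.neg (fun x _ => ?_) measurableSet_Ioc
  simp

lemma integrableOn_log_sq_Ioc :
    IntegrableOn (fun x : ℝ => (Real.log x)^2) (Set.Ioc (0:ℝ) 1) := by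
  have h := (neg_log_pow 2).1
  rw [← integrableOn_Ioc_iff_integrableOn_Ioo] at h
  refine IntegrableOn.congr_fun h (fun x _ => ?_) measurableSet_Ioc
  simp [neg_sq]

lemma integral_log_Ioc : ∫ x in Set.Ioc (0:ℝ) 1, Real.log x = -1 := by
  have h := (neg_log_pow 1).2
  rw [← MeasureTheory.integral_Ioc_eq_integral_Ioo] at h
  simp only [pow_one, Nat.factorial_one, Nat.cast_one] at h
  rw [← neg_eq_iff_eq_neg, ← integral_neg]
  exact h

lemma integral_log_sq_Ioc : ∫ x in Set.Ioc (0:ℝ) 1, (Real.log x)^2 = 2 := by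
  have h := (neg_log_pow 2).2
  rw [← MeasureTheory.integral_Ioc_eq_integral_Ioo] at h
  rw [setIntegral_congr_fun measurableSet_Ioc
    (fun x _ => (neg_sq (Real.log x)).symm : Set.EqOn _ (fun x => (-Real.log x)^2) _)]
  rw [h]
  norm_num [Nat.factorial]

lemma outer_B (q t : ℝ) (ht : -(1/2:ℝ) < t) (hs : t+q-1 = 0) :
    ∫ x in Set.Ioc (0:ℝ) 1,
        (x ^ (t+q-1) / (1+t) + ∫ y in Set.Ioc x 1, y ^ (t+q-2)) ^ 2
      = (2*t^2+7*t+4+q) / ((1+t)^2*(t+q)*(2*t+2*q-1)) := by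
  have hq : q = 1 - t := by linarith
  subst hq
  have ht0 : (0:ℝ) < 1+t := by linarith
  have e : Set.EqOn
      (fun x : ℝ => (x ^ (t+(1-t)-1) / (1+t) + ∫ y in Set.Ioc x 1, y ^ (t+(1-t)-2)) ^ 2)
      (fun x : ℝ => (1/(1+t))^2 + (-2/(1+t)) * Real.log x + (Real.log x)^2)
      (Set.Ioc 0 1) := by
    intro x hx
    have hx0 : (0:ℝ) < x := hx.1
    have hI2 : ∫ y in Set.Ioc x 1, y ^ (t+(1-t)-2) = -Real.log x := by
      rw [← intervalIntegral.integral_of_le hx.2, show t+(1-t)-2 = (-1:ℝ) by ring]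
      simp_rw [Real.rpow_neg_one]
      rw [integral_inv (notMem_uIcc_of_lt hx0 one_pos), one_div, Real.log_inv]
    simp only [hI2, show t+(1-t)-1 = (0:ℝ) by ring, Real.rpow_zero]
    ring
  rw [setIntegral_congr_fun measurableSet_Ioc e]
  have iB : IntegrableOn (fun x : ℝ => (-2/(1+t)) * Real.log x) (Set.Ioc (0:ℝ) 1) :=
    integrableOn_log_Ioc.const_mul _
  have iA : IntegrableOn (fun _ : ℝ => (1/(1+t))^2) (Set.Ioc (0:ℝ) 1) :=
    integrableOn_const (by simp) (by simp)
  have iAB : IntegrableOn (fun x : ℝ => (1/(1+t))^2 + (-2/(1+t)) * Real.log x)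
      (Set.Ioc (0:ℝ) 1) := iA.add iB
  rw [integral_add iAB integrableOn_log_sq_Ioc, integral_add iA iB, integral_const_mul,
    integral_log_Ioc, integral_log_sq_Ioc, integral_const]
  simp only [measureReal_def, MeasureTheory.Measure.restrict_apply, MeasurableSet.univ, Set.univ_inter,
    Real.volume_Ioc, sub_zero, ENNReal.toReal_ofReal zero_le_one, smul_eq_mul, mul_one]
  have hD : ((1+t)^2*(t+(1-t))*(2*t+2*(1-t)-1)) ≠ 0 := by
    have : ((1+t)^2*(t+(1-t))*(2*t+2*(1-t)-1)) = (1+t)^2 := by ring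
    rw [this]
    positivity
  rw [eq_div_iff hD]
  have hne1 : (1+t) ≠ 0 := ne_of_gt ht0
  field_simp
  ring


lemma int_rpow {r : ℝ} (hr : -1 < r) : ∫ x in Set.Ioc (0:ℝ) 1, x ^ r = 1/(r+1) := by
  rw [← intervalIntegral.integral_of_le zero_le_one, integral_rpow (Or.inl hr),
    Real.one_rpow, Real.zero_rpow (by linarith)]
  ring

lemma integrableOn_rpow {r : ℝ} (hr : -1 < r) {x : ℝ} (hx : 0 < x) :
    IntegrableOn (fun y : ℝ => y ^ r) (Set.Ioc 0 x) := by
  rw [← intervalIntegrable_iff_integrableOn_Ioc_of_le hx.le]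
  exact intervalIntegral.intervalIntegrable_rpow' hr

lemma sq_expand (u v y : ℝ) (hu : u ≠ 0) (hv : v ≠ 0) :
    (y/u + (1-y)/v)^2
      = (1/u - 1/v)^2 * (y*y) + 2*(1/u - 1/v)*(1/v)*y + (1/v)^2 := by
  field_simp
  ring

set_option maxHeartbeats 2000000 in
lemma outer_A (q t : ℝ) (hq1 : 1 ≤ q) (hq2 : q < 2) (ht : -(1/2:ℝ) < t)
    (hs : t+q-1 ≠ 0) :
    ∫ x in Set.Ioc (0:ℝ) 1,
        (x ^ (t+q-1) / (1+t) + ∫ y in Set.Ioc x 1, y ^ (t+q-2)) ^ 2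
      = (2*t^2+7*t+4+q) / ((1+t)^2*(t+q)*(2*t+2*q-1)) := by
  have ht0 : (0:ℝ) < 1+t := by linarith
  have hs1 : (0:ℝ) < t+q := by linarith
  have h2s : (-1:ℝ) < 2*(t+q-1) := by linarith
  have e : Set.EqOn
      (fun x : ℝ => (x ^ (t+q-1) / (1+t) + ∫ y in Set.Ioc x 1, y ^ (t+q-2)) ^ 2)
      (fun x : ℝ => (1/(1+t) - 1/(t+q-1))^2 * x ^ (2*(t+q-1))
        + (2*(1/(1+t) - 1/(t+q-1))*(1/(t+q-1))) * x ^ (t+q-1) + (1/(t+q-1))^2)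
      (Set.Ioc 0 1) := by
    intro x hx
    have hx0 : (0:ℝ) < x := hx.1
    have hI2 : ∫ y in Set.Ioc x 1, y ^ (t+q-2) = (1 - x ^ (t+q-1)) / (t+q-1) := by
      rw [← intervalIntegral.integral_of_le hx.2,
        integral_rpow (Or.inr ⟨by intro h; apply hs; linarith,
          notMem_uIcc_of_lt hx0 one_pos⟩),
        Real.one_rpow, show t+q-2+1 = t+q-1 by ring]
    have hsq : x ^ (2*(t+q-1)) = x ^ (t+q-1) * x ^ (t+q-1) := by
      rw [two_mul, Real.rpow_add hx0]
    simp only [hI2, hsq]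
    exact sq_expand (1+t) (t+q-1) _ (ne_of_gt ht0) hs
  rw [setIntegral_congr_fun measurableSet_Ioc e]
  have iA : IntegrableOn (fun x : ℝ => (1/(1+t) - 1/(t+q-1))^2 * x ^ (2*(t+q-1)))
      (Set.Ioc (0:ℝ) 1) := (integrableOn_rpow h2s one_pos).const_mul _
  have iB : IntegrableOn
      (fun x : ℝ => (2*(1/(1+t) - 1/(t+q-1))*(1/(t+q-1))) * x ^ (t+q-1))
      (Set.Ioc (0:ℝ) 1) := (integrableOn_rpow (by linarith) one_pos).const_mul _
  have iC : IntegrableOn (fun _ : ℝ => (1/(t+q-1))^2) (Set.Ioc (0:ℝ) 1) :=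
    integrableOn_const (by simp) (by simp)
  have iAB : IntegrableOn (fun x : ℝ => (1/(1+t) - 1/(t+q-1))^2 * x ^ (2*(t+q-1))
      + (2*(1/(1+t) - 1/(t+q-1))*(1/(t+q-1))) * x ^ (t+q-1)) (Set.Ioc (0:ℝ) 1) :=
    iA.add iB
  rw [integral_add iAB iC, integral_add iA iB, integral_const_mul,
    integral_const_mul, int_rpow h2s, int_rpow (by linarith), integral_const]
  simp only [measureReal_def, MeasureTheory.Measure.restrict_apply, MeasurableSet.univ, Set.univ_inter,
    Real.volume_Ioc, sub_zero, ENNReal.toReal_ofReal zero_le_one, smul_eq_mul, mul_one]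
  rw [show 2*(t+q-1)+1 = 2*t+2*q-1 by ring, show t+q-1+1 = t+q by ring]
  have hne1 : (1+t) ≠ 0 := ne_of_gt ht0
  have hne2 : (t+q) ≠ 0 := ne_of_gt hs1
  have hne3 : (2*t+2*q-1) ≠ 0 := by intro h; linarith
  generalize hD : 2*t+2*q-1 = D at hne3 ⊢
  field_simp
  subst hD
  ring


lemma inner_int (β q t : ℝ) (ht : -(1/2:ℝ) < t) {x : ℝ} (hx : x ∈ Set.Ioc (0:ℝ) 1) :
    ∫ y in Set.Ioc (0:ℝ) 1, β * max x y ^ (q-2) * (Real.sqrt (1+2*t) * y ^ t)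
      = β * Real.sqrt (1+2*t) *
        (x ^ (t+q-1) / (1+t) + ∫ y in Set.Ioc x 1, y ^ (t+q-2)) := by
  obtain ⟨hx0, hx1⟩ := hx
  set c := β * Real.sqrt (1+2*t) with hc
  have ht1 : (-1:ℝ) < t := by linarith
  have e1 : Set.EqOn (fun y : ℝ => β * max x y ^ (q-2) * (Real.sqrt (1+2*t) * y ^ t))
      (fun y : ℝ => (c * x ^ (q-2)) * y ^ t) (Set.Ioc 0 x) := by
    intro y hy
    simp only [max_eq_left hy.2]
    ring
  have e2 : Set.EqOn (fun y : ℝ => β * max x y ^ (q-2) * (Real.sqrt (1+2*t) * y ^ t))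
      (fun y : ℝ => c * y ^ (t+q-2)) (Set.Ioc x 1) := by
    intro y hy
    have hy0 : 0 < y := lt_trans hx0 hy.1
    simp only [max_eq_right hy.1.le]
    rw [show t+q-2 = (q-2) + t by ring, Real.rpow_add hy0]
    ring
  have i1 : IntegrableOn (fun y : ℝ => β * max x y ^ (q-2) * (Real.sqrt (1+2*t) * y ^ t))
      (Set.Ioc 0 x) :=
    IntegrableOn.congr_fun ((integrableOn_rpow ht1 hx0).const_mul (c * x ^ (q-2)))
      (fun y hy => (e1 hy).symm) measurableSet_Ioc
  have i2 : IntegrableOn (fun y : ℝ => β * max x y ^ (q-2) * (Real.sqrt (1+2*t) * y ^ t))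
      (Set.Ioc x 1) := by
    refine IntegrableOn.congr_fun ?_ (fun y hy => (e2 hy).symm) measurableSet_Ioc
    refine ((ContinuousOn.integrableOn_compact isCompact_Icc ?_).mono_set
      Set.Ioc_subset_Icc_self)
    refine (continuousOn_const.mul ((continuousOn_id.rpow_const ?_)))
    intro y hy
    exact Or.inl (ne_of_gt (lt_of_lt_of_le hx0 hy.1))
  rw [show Set.Ioc (0:ℝ) 1 = Set.Ioc 0 x ∪ Set.Ioc x 1 from
      (Set.Ioc_union_Ioc_eq_Ioc hx0.le hx1).symm,
    setIntegral_union (Set.Ioc_disjoint_Ioc_of_le le_rfl) measurableSet_Ioc i1 i2,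
    setIntegral_congr_fun measurableSet_Ioc e1,
    setIntegral_congr_fun measurableSet_Ioc e2,
    integral_const_mul, integral_const_mul]
  have : ∫ y in Set.Ioc (0:ℝ) x, y ^ t = x ^ (t+1) / (t+1) := by
    rw [← intervalIntegral.integral_of_le hx0.le, integral_rpow (Or.inl ht1),
      Real.zero_rpow (by linarith)]
    ring
  rw [this]
  have h2 : x ^ (q-2) * (x ^ (t+1) / (t+1)) = x ^ (t+q-1) / (1+t) := by
    rw [show t+q-1 = (q-2)+(t+1) by ring, Real.rpow_add hx0 (q-2) (t+1), mul_div_assoc, add_comm 1 t]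
  rw [mul_assoc c, h2, mul_add]

/-- for `f_t(x) = √(1+2t)·x^t` on `(0,1]` and the integral operator with
kernel `κ(x,y) = β·max{x,y}^(-(2p-1)/p)`, we have `‖f_t‖₂ = 1` and
`‖T_κ f_t‖₂² = β²·(1+2t)(2t²+7t+4+1/p)/((1+t)²(t+1/p)(2t+2/p-1))`.
In particular, any upper bound `C` for the operator norm of `T_κ` over non-negative
functions of `L²`-norm at most `1` satisfies
`C ≥ β·√((1+2t)(2t²+7t+4+1/p)/((1+t)²(t+1/p)(2t+2/p-1)))` for every `t > -1/2`. -/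
theorem kernel_operator_norm_lower_bound (β p t : ℝ) (hβ : 0 < β)
    (hp : p ∈ Set.Ioc (1/2 : ℝ) 1) (ht : t ∈ Set.Ioi (-(1/2) : ℝ)) :
    (∫ x in Set.Ioc (0:ℝ) 1, (Real.sqrt (1 + 2 * t) * x ^ t) ^ 2) = 1 ∧
    (∫ x in Set.Ioc (0:ℝ) 1,
        (∫ y in Set.Ioc (0:ℝ) 1,
          β * max x y ^ (-(2 * p - 1) / p) * (Real.sqrt (1 + 2 * t) * y ^ t)) ^ 2) =
      β ^ 2 * ((1 + 2 * t) * (2 * t ^ 2 + 7 * t + 4 + 1 / p) /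
        ((1 + t) ^ 2 * (t + 1 / p) * (2 * t + 2 / p - 1))) ∧
    ∀ C : ℝ,
      (∀ f : ℝ → ℝ, Measurable f → (∀ x, 0 ≤ f x) →
        (∫ x in Set.Ioc (0:ℝ) 1, f x ^ 2) ≤ 1 →
        Real.sqrt (∫ x in Set.Ioc (0:ℝ) 1,
          (∫ y in Set.Ioc (0:ℝ) 1, β * max x y ^ (-(2 * p - 1) / p) * f y) ^ 2) ≤ C) →
      β * Real.sqrt ((1 + 2 * t) * (2 * t ^ 2 + 7 * t + 4 + 1 / p) /
        ((1 + t) ^ 2 * (t + 1 / p) * (2 * t + 2 / p - 1))) ≤ C := by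
  obtain ⟨hp1, hp2⟩ := hp
  have hp0 : 0 < p := by linarith
  have ht' : -(1/2:ℝ) < t := ht
  have hq1 : 1 ≤ 1/p := by rw [le_div_iff₀ hp0]; linarith
  have hq2 : 1/p < 2 := by rw [div_lt_iff₀ hp0]; linarith
  have hexp : -(2*p-1)/p = 1/p - 2 := by field_simp; ring
  have h2t : (0:ℝ) < 1+2*t := by linarith
  -- Part 1
  have part1 : (∫ x in Set.Ioc (0:ℝ) 1, (Real.sqrt (1 + 2 * t) * x ^ t) ^ 2) = 1 := by
    have e : Set.EqOn (fun x : ℝ => (Real.sqrt (1 + 2 * t) * x ^ t) ^ 2)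
        (fun x : ℝ => (1+2*t) * x ^ (2*t)) (Set.Ioc 0 1) := by
      intro x hx
      show (Real.sqrt (1 + 2 * t) * x ^ t) ^ 2 = (1+2*t) * x ^ (2*t)
      rw [mul_pow, Real.sq_sqrt h2t.le, ← Real.rpow_natCast (x ^ t) 2,
        ← Real.rpow_mul hx.1.le]
      norm_num [mul_comm t 2]
    rw [setIntegral_congr_fun measurableSet_Ioc e, integral_const_mul,
      int_rpow (by linarith)]
    rw [mul_one_div, div_eq_one_iff_eq (by linarith : (2*t+1:ℝ) ≠ 0)]
    ring
  -- Part 2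
  have key : (∫ x in Set.Ioc (0:ℝ) 1,
      (∫ y in Set.Ioc (0:ℝ) 1,
        β * max x y ^ (-(2 * p - 1) / p) * (Real.sqrt (1 + 2 * t) * y ^ t)) ^ 2) =
      β ^ 2 * ((1 + 2 * t) * (2 * t ^ 2 + 7 * t + 4 + 1 / p) /
        ((1 + t) ^ 2 * (t + 1 / p) * (2 * t + 2 / p - 1))) := by
    have e : Set.EqOn
        (fun x : ℝ => (∫ y in Set.Ioc (0:ℝ) 1,
          β * max x y ^ (-(2 * p - 1) / p) * (Real.sqrt (1 + 2 * t) * y ^ t)) ^ 2)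
        (fun x : ℝ => (β * Real.sqrt (1+2*t))^2 *
          (x ^ (t+1/p-1) / (1+t) + ∫ y in Set.Ioc x 1, y ^ (t+1/p-2)) ^ 2)
        (Set.Ioc 0 1) := by
      intro x hx
      have : (∫ y in Set.Ioc (0:ℝ) 1,
          β * max x y ^ (-(2 * p - 1) / p) * (Real.sqrt (1 + 2 * t) * y ^ t)) =
          ∫ y in Set.Ioc (0:ℝ) 1,
            β * max x y ^ (1/p - 2) * (Real.sqrt (1 + 2 * t) * y ^ t) := by
        simp_rw [hexp]
      simp only [this, inner_int β (1/p) t ht' hx, mul_pow]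
    rw [setIntegral_congr_fun measurableSet_Ioc e, integral_const_mul]
    have hval : (∫ x in Set.Ioc (0:ℝ) 1,
        (x ^ (t+1/p-1) / (1+t) + ∫ y in Set.Ioc x 1, y ^ (t+1/p-2)) ^ 2)
        = (2*t^2+7*t+4+1/p) / ((1+t)^2*(t+1/p)*(2*t+2*(1/p)-1)) := by
      by_cases hcase : t + 1/p - 1 = 0
      · exact outer_B (1/p) t ht' hcase
      · exact outer_A (1/p) t hq1 hq2 ht' hcase
    rw [hval, mul_pow, Real.sq_sqrt h2t.le]
    rw [show 2*(1/p) = 2/p by ring]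
    ring
  refine ⟨part1, key, fun C hC => ?_⟩
  set f : ℝ → ℝ := (Set.Ioc (0:ℝ) 1).indicator
    (fun x : ℝ => Real.sqrt (1 + 2 * t) * x ^ t) with hf
  have hfm : Measurable f :=
    (measurable_const.mul (by measurability)).indicator measurableSet_Ioc
  have hfnn : ∀ x, 0 ≤ f x := by
    intro x
    apply Set.indicator_nonneg
    intro y hy
    exact mul_nonneg (Real.sqrt_nonneg _) (Real.rpow_nonneg hy.1.le _)
  have hfe : Set.EqOn f (fun x : ℝ => Real.sqrt (1 + 2 * t) * x ^ t)
      (Set.Ioc (0:ℝ) 1) := fun x hx => Set.indicator_of_mem hx _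
  have hfl2 : (∫ x in Set.Ioc (0:ℝ) 1, f x ^ 2) ≤ 1 := by
    rw [setIntegral_congr_fun measurableSet_Ioc
      (fun x hx => by simp only []; rw [hfe hx] : Set.EqOn (fun x => f x ^ 2)
        (fun x : ℝ => (Real.sqrt (1 + 2 * t) * x ^ t) ^ 2) (Set.Ioc (0:ℝ) 1))]
    rw [part1]
  have hmain := hC f hfm hfnn hfl2
  have hEq : (∫ x in Set.Ioc (0:ℝ) 1,
      (∫ y in Set.Ioc (0:ℝ) 1, β * max x y ^ (-(2 * p - 1) / p) * f y) ^ 2)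
      = (∫ x in Set.Ioc (0:ℝ) 1,
      (∫ y in Set.Ioc (0:ℝ) 1,
        β * max x y ^ (-(2 * p - 1) / p) * (Real.sqrt (1 + 2 * t) * y ^ t)) ^ 2) := by
    refine setIntegral_congr_fun measurableSet_Ioc (fun x _ => ?_)
    congr 1
    refine setIntegral_congr_fun measurableSet_Ioc (fun y hy => ?_)
    rw [hfe hy]
  rw [hEq, key, Real.sqrt_mul (sq_nonneg β), Real.sqrt_sq hβ.le] at hmain
  exact hmain
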